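/- Let G be a second-countable metrizable topological group and let U, V be open neighbourhoods of the identity. If rk(V,U) ≤ β for some ordinal β, then rk(V,U) ≤ γ for some countable ordinal γ. -/

import Mathlib

universe u v w x

open Topology

/-- The conjugate `g W g⁻¹` of a subset `W` of a group by the element `g`. -/
def conjSet {G : Type u} [Group G] (g : G) (W : Set G) : Set G :=
  (fun x => g * x * g⁻¹) '' W

/-- `RkLe V U β` asserts that the ordinal rank `rk(V, U)` is at most `β`:
either `U ⊆ V` (rank `0`), or there is an open identity neighbourhood `W`
such that `rk(V, g W g⁻¹) < β` for every `g ∈ U`. -/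
def RkLe {G : Type u} [Group G] [TopologicalSpace G] (V U : Set G) (β : Ordinal.{v}) : Prop :=
  U ⊆ V ∨ ∃ W : Set G, IsOpen W ∧ (1 : G) ∈ W ∧
    ∀ g ∈ U, ∃ γ : Ordinal.{v}, ∃ _ : γ < β, RkLe V (conjSet g W) γ
termination_by β

lemma rkLe_mono_ord {G : Type u} [Group G] [TopologicalSpace G] {V U : Set G}
    {β β' : Ordinal.{v}} (hβ : β ≤ β') (h : RkLe V U β) : RkLe V U β' := by
  rw [RkLe] at h ⊢
  rcases h with h | ⟨W, hWo, hW1, hW⟩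
  · exact Or.inl h
  · refine Or.inr ⟨W, hWo, hW1, fun g hg => ?_⟩
    obtain ⟨γ, hγ, hr⟩ := hW g hg
    exact ⟨γ, lt_of_lt_of_le hγ hβ, hr⟩

lemma rkLe_anti {G : Type u} [Group G] [TopologicalSpace G] {V U U' : Set G}
    {β : Ordinal.{v}} (hU : U' ⊆ U) (h : RkLe V U β) : RkLe V U' β := by
  rw [RkLe] at h ⊢
  rcases h with h | ⟨W, hWo, hW1, hW⟩
  · exact Or.inl (hU.trans h)
  · exact Or.inr ⟨W, hWo, hW1, fun g hg => hW g (hU hg)⟩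

lemma isOpen_conjSet {G : Type u} [Group G] [TopologicalSpace G] [IsTopologicalGroup G]
    {W : Set G} (g : G) (hW : IsOpen W) : IsOpen (conjSet g W) :=
  ((isOpenMap_mul_right g⁻¹).comp (isOpenMap_mul_left g)) W hW

lemma one_mem_conjSet {G : Type u} [Group G] [TopologicalSpace G]
    {W : Set G} (g : G) (hW : (1 : G) ∈ W) : (1 : G) ∈ conjSet g W :=
  ⟨1, hW, by simp⟩

lemma conjSet_subset {G : Type u} [Group G] [TopologicalSpace G]
    {W₀ W : Set G} (g h : G) (ha : h⁻¹ * g ∈ W₀)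
    (hkey : ∀ a ∈ W₀, ∀ x ∈ W₀, a * x * a⁻¹ ∈ W) :
    conjSet g W₀ ⊆ conjSet h W := by
  rintro _ ⟨x, hx, rfl⟩
  refine ⟨(h⁻¹ * g) * x * (h⁻¹ * g)⁻¹, hkey _ ha _ hx, ?_⟩
  group

/-- In a second-countable metrizable topological group, if `rk(V, U)` is bounded by an
ordinal then it is bounded by a countable ordinal. -/
theorem rkLe_countable_of_rkLe {G : Type u} [Group G] [TopologicalSpace G]
    [IsTopologicalGroup G] [TopologicalSpace.MetrizableSpace G]
    [SecondCountableTopology G]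
    (U V : Set G) (hUo : IsOpen U) (hU1 : (1 : G) ∈ U) (hVo : IsOpen V) (hV1 : (1 : G) ∈ V)
    (β : Ordinal.{v}) (h : RkLe V U β) :
    ∃ γ : Ordinal.{v}, γ.card ≤ Cardinal.aleph0 ∧ RkLe V U γ := by
  induction β using Ordinal.induction generalizing U with
  | h β IH =>
  rw [RkLe] at h
  rcases h with h | ⟨W, hWo, hW1, hW⟩
  · exact ⟨0, by simp, by rw [RkLe]; exact Or.inl h⟩
  -- find W₀ with `a x a⁻¹ ∈ W` for all `a, x ∈ W₀`
  have hc : Continuous fun p : G × G => p.1 * p.2 * p.1⁻¹ := by fun_prop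
  have hpre : (fun p : G × G => p.1 * p.2 * p.1⁻¹) ⁻¹' W ∈ 𝓝 ((1 : G), (1 : G)) :=
    hc.continuousAt.preimage_mem_nhds
      (show W ∈ 𝓝 ((1 : G) * 1 * 1⁻¹) by simpa using hWo.mem_nhds hW1)
  rw [nhds_prod_eq] at hpre
  rcases Filter.mem_prod_iff.mp hpre with ⟨A, hA, B, hB, hAB⟩
  rcases mem_nhds_iff.mp hA with ⟨A', hA's, hA'o, hA'1⟩
  rcases mem_nhds_iff.mp hB with ⟨B', hB's, hB'o, hB'1⟩
  set W₀ : Set G := A' ∩ B' with hW₀def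
  have hW₀o : IsOpen W₀ := hA'o.inter hB'o
  have hW₀1 : (1 : G) ∈ W₀ := ⟨hA'1, hB'1⟩
  have hkey : ∀ a ∈ W₀, ∀ x ∈ W₀, a * x * a⁻¹ ∈ W := by
    intro a ha x hx
    exact hAB (Set.mk_mem_prod (hA's ha.1) (hB's hx.2))
  -- countable subcover of the cover of U by `g • W₀`
  set s : U → Set G := fun h => (fun x => (h : G) * x) '' W₀ with hsdef
  have hso : ∀ h, IsOpen (s h) := fun h => isOpenMap_mul_left _ W₀ hW₀o
  obtain ⟨T, hTc, hTeq⟩ := TopologicalSpace.isOpen_iUnion_countable s hso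
  have hmem : ∀ g : U, (g : G) ∈ ⋃ i ∈ T, s i := by
    intro g
    rw [hTeq]
    exact Set.mem_iUnion.mpr ⟨g, ⟨1, hW₀1, by simp⟩⟩
  have hTne : T.Nonempty := by
    rcases Set.mem_iUnion₂.mp (hmem ⟨1, hU1⟩) with ⟨i, hi, _⟩
    exact ⟨i, hi⟩
  obtain ⟨e, he⟩ := hTc.exists_eq_range hTne
  -- countable bounds for each conjugate
  have hF : ∀ g : U, ∃ δ : Ordinal.{v},
      δ.card ≤ Cardinal.aleph0 ∧ RkLe V (conjSet (g : G) W) δ := by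
    intro g
    obtain ⟨γg, hγg, hr⟩ := hW g g.2
    exact IH γg hγg (conjSet (g : G) W) (isOpen_conjSet _ hWo) (one_mem_conjSet _ hW1) hr
  choose F hF1 hF2 using hF
  set Δ : Ordinal.{v} := iSup (fun n : ℕ => F (e n)) with hΔdef
  have hΔlt : Δ < (Cardinal.aleph 1).ord := by
    refine Ordinal.iSup_lt_ord_lift ?_ fun n => ?_
    · rw [Cardinal.isRegular_aleph_one.cof_eq]
      simp [Cardinal.aleph0_lt_aleph_one]
    · exact Cardinal.lt_ord.mpr (lt_of_le_of_lt (hF1 _) Cardinal.aleph0_lt_aleph_one)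
  refine ⟨Δ + 1, ?_, ?_⟩
  · have : Δ + 1 < (Cardinal.aleph 1).ord := by
      rw [Ordinal.add_one_eq_succ]
      exact (Cardinal.isSuccLimit_ord Cardinal.aleph0_lt_aleph_one.le).succ_lt hΔlt
    have := Cardinal.lt_ord.mp this
    rwa [← Cardinal.succ_aleph0, Order.lt_succ_iff] at this
  · rw [RkLe]
    refine Or.inr ⟨W₀, hW₀o, hW₀1, fun g hg => ?_⟩
    obtain ⟨i, hiT, hgs⟩ := Set.mem_iUnion₂.mp (hmem ⟨g, hg⟩)
    have : i ∈ Set.range e := he ▸ hiT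
    obtain ⟨n, rfl⟩ := this
    obtain ⟨x, hx, hgx⟩ := hgs
    have hsub : conjSet g W₀ ⊆ conjSet ((e n : G)) W := by
      refine conjSet_subset _ _ ?_ hkey
      have hgx' : (e n : G) * x = g := hgx
      have : (e n : G)⁻¹ * g = x := by rw [← hgx']; group
      rwa [this]
    refine ⟨F (e n), ?_, rkLe_anti hsub (hF2 (e n))⟩
    calc F (e n) ≤ Δ := Ordinal.le_iSup (fun n : ℕ => F (e n)) n
    _ < Δ + 1 := by rw [Ordinal.add_one_eq_succ]; exact Order.lt_succ Δ
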